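/- (Corollary 3) Let n be a positive integer, let k be a real number with 0 ≤ k ≤ n, let α, β be nonnegative reals, and define f : [0, n−k] → ℝ by f(l) = 2^{−l}(1+β)^{n} + 2^{−(n−k−l)}(1+α)^{n}. Set ρ = (1+α)/(1+β). Then: (i) if ρ > 2^{(n−k)/n}, then f attains its minimum over [0, n−k] at l = 0; (ii) if ρ < 2^{−(n−k)/n}, then f attains its minimum over [0, n−k] at l = n−k; (iii) if 2^{−(n−k)/n} ≤ ρ ≤ 2^{(n−k)/n}, then the point ľ = (n·(1 − log₂ρ) − k)/2 lies in [0, n−k] and f attains its minimum over [0, n−k] at ľ. -/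

import Mathlib

private lemma amgm15 (x y c : ℝ) (hx : 0 ≤ x) (hy : 0 ≤ y) (hc : 0 ≤ c) (h : c^2 ≤ x*y) :
    2*c ≤ x + y := by
  nlinarith [sq_nonneg (x - y), sq_nonneg (x + y - 2*c)]

private lemma case2aux (u v w A B : ℝ) (huv : u*v = 1) (hB : 0 ≤ B)
    (hA2 : A ≤ w*B) (hvw : v*w ≤ 1) (hu : 0 ≤ u) :
    w*B + A ≤ u*B + v*w*A := by
  have e : B*(u - 2*w + v*w^2) = B*u*(1 - v*w)^2 := by
    linear_combination (2*B*w - B*v*w^2) * huv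
  have h1 : 0 ≤ B*u*(1 - v*w)^2 := by positivity
  have h2 : 0 ≤ (1 - v*w)*(w*B - A) := mul_nonneg (by linarith) (by linarith)
  nlinarith [e, h1, h2]

set_option maxHeartbeats 1600000 in
theorem stmt15 (n : ℕ) (hn : 0 < n) (k : ℝ) (hk₀ : 0 ≤ k) (hkn : k ≤ n)
    (α β : ℝ) (hα : 0 ≤ α) (hβ : 0 ≤ β) :
    let f : ℝ → ℝ := fun l =>
      (2 : ℝ) ^ (-l) * (1 + β) ^ n + (2 : ℝ) ^ (-((n : ℝ) - k - l)) * (1 + α) ^ n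
    let ρ : ℝ := (1 + α) / (1 + β)
    ((2 : ℝ) ^ (((n : ℝ) - k) / n) < ρ →
      ∀ x ∈ Set.Icc (0 : ℝ) ((n : ℝ) - k), f 0 ≤ f x) ∧
    (ρ < (2 : ℝ) ^ (-(((n : ℝ) - k) / n)) →
      ∀ x ∈ Set.Icc (0 : ℝ) ((n : ℝ) - k), f ((n : ℝ) - k) ≤ f x) ∧
    ((2 : ℝ) ^ (-(((n : ℝ) - k) / n)) ≤ ρ → ρ ≤ (2 : ℝ) ^ (((n : ℝ) - k) / n) →
      ((n : ℝ) * (1 - Real.logb 2 ρ) - k) / 2 ∈ Set.Icc (0 : ℝ) ((n : ℝ) - k) ∧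
      ∀ x ∈ Set.Icc (0 : ℝ) ((n : ℝ) - k),
        f (((n : ℝ) * (1 - Real.logb 2 ρ) - k) / 2) ≤ f x) := by
  intro f ρ
  have hn' : (0:ℝ) < n := by exact_mod_cast hn
  set m : ℝ := (n:ℝ) - k with hm_def
  have hm : 0 ≤ m := by simp only [hm_def]; linarith
  set A : ℝ := (1+α)^n with hA_def
  set B : ℝ := (1+β)^n with hB_def
  have hA : (0:ℝ) < A := pow_pos (by linarith) n
  have hB : (0:ℝ) < B := pow_pos (by linarith) n
  have hρ : 0 < ρ := div_pos (by linarith) (by linarith)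
  have hρpow : ρ ^ n = A / B := div_pow _ _ n
  set w : ℝ := (2:ℝ)^(-m) with hw_def
  have hw : (0:ℝ) < w := Real.rpow_pos_of_pos two_pos _
  have h2m : w * (2:ℝ)^(m) = 1 := by
    rw [hw_def, ← Real.rpow_add two_pos]; simp
  have hsplit : ∀ x : ℝ, (2:ℝ)^(-(m - x)) = (2:ℝ)^x * w := by
    intro x; rw [hw_def, ← Real.rpow_add two_pos]; ring_nf
  -- facts for each x ∈ [0,m]
  have hfacts : ∀ x : ℝ, x ∈ Set.Icc (0:ℝ) m →
      (2:ℝ)^(-x) * (2:ℝ)^x = 1 ∧ (2:ℝ)^(-x) ≤ 1 ∧ 1 ≤ (2:ℝ)^x ∧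
      w ≤ (2:ℝ)^(-x) ∧ (2:ℝ)^x * w ≤ 1 := by
    rintro x ⟨hx0, hxm⟩
    refine ⟨by rw [← Real.rpow_add two_pos]; simp, ?_, ?_, ?_, ?_⟩
    · calc (2:ℝ)^(-x) ≤ (2:ℝ)^(0:ℝ) :=
            Real.rpow_le_rpow_left_iff (by norm_num : (1:ℝ) < 2) |>.2 (by linarith)
        _ = 1 := Real.rpow_zero 2
    · calc (1:ℝ) = (2:ℝ)^(0:ℝ) := (Real.rpow_zero 2).symm
        _ ≤ (2:ℝ)^x := Real.rpow_le_rpow_left_iff (by norm_num : (1:ℝ) < 2) |>.2 hx0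
    · exact Real.rpow_le_rpow_left_iff (by norm_num : (1:ℝ) < 2) |>.2 (by linarith)
    · rw [← hsplit x]
      calc (2:ℝ)^(-(m-x)) ≤ (2:ℝ)^(0:ℝ) :=
            Real.rpow_le_rpow_left_iff (by norm_num : (1:ℝ) < 2) |>.2 (by linarith)
        _ = 1 := Real.rpow_zero 2
  have hu0 : ∀ x : ℝ, (0:ℝ) < (2:ℝ)^x := fun x => Real.rpow_pos_of_pos two_pos x
  -- translate the power conditions
  have hpowm : ((2:ℝ)^(m/n))^n = (2:ℝ)^m := by
    rw [← Real.rpow_natCast ((2:ℝ)^(m/n)) n, ← Real.rpow_mul (by norm_num),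
      div_mul_cancel₀ _ (ne_of_gt hn')]
  refine ⟨?_, ?_, ?_⟩
  · -- case (i)
    intro hcond x hx
    obtain ⟨huv, hu1, hv1, hwu, hvw⟩ := hfacts x hx
    have hABpow : (2:ℝ)^m < ρ ^ n := by
      rw [← hpowm]
      exact pow_lt_pow_left₀ hcond (Real.rpow_nonneg (by norm_num) _) (by omega)
    have hBA : B < w * A := by
      rw [hρpow, lt_div_iff₀ hB] at hABpow
      nlinarith [mul_lt_mul_of_pos_left hABpow hw]
    show (2:ℝ)^(-(0:ℝ)) * B + (2:ℝ)^(-(m - 0)) * A ≤ (2:ℝ)^(-x) * B + (2:ℝ)^(-(m-x)) * A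
    rw [hsplit, hsplit]
    simp only [neg_zero, Real.rpow_zero]
    nlinarith [mul_nonneg (mul_nonneg hB.le (hu0 (-x)).le) (sq_nonneg ((2:ℝ)^x - 1)),
      mul_nonneg (sub_nonneg.2 hv1) (by linarith : (0:ℝ) ≤ w*A - B), huv, hB.le]
  · -- case (ii)
    intro hcond x hx
    obtain ⟨huv, hu1, hv1, hwu, hvw⟩ := hfacts x hx
    have hABpow : ρ ^ n < ((2:ℝ)^(-(m/n)))^n := by
      exact pow_lt_pow_left₀ hcond hρ.le (by omega)
    have hpowm' : ((2:ℝ)^(-(m/n)))^n = w := by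
      rw [← Real.rpow_natCast ((2:ℝ)^(-(m/n))) n, ← Real.rpow_mul (by norm_num), hw_def]
      congr 1
      field_simp
    have hAB : A < w * B := by
      rw [hpowm', hρpow, div_lt_iff₀ hB] at hABpow
      linarith
    show (2:ℝ)^(-m) * B + (2:ℝ)^(-(m - m)) * A ≤ (2:ℝ)^(-x) * B + (2:ℝ)^(-(m-x)) * A
    rw [hsplit, hsplit]
    have h2mm : (2:ℝ)^m * w = 1 := by linarith [h2m]
    have := case2aux ((2:ℝ)^(-x)) ((2:ℝ)^x) w A B huv hB.le hAB.le hvw (hu0 (-x)).le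
    nlinarith [this]
  · -- case (iii)
    intro h1 h2
    set L : ℝ := Real.logb 2 ρ with hL_def
    have hLle : L ≤ m/n := by
      have := (Real.logb_le_logb (by norm_num : (1:ℝ) < 2) hρ (hu0 (m/n))).2 h2
      rwa [Real.logb_rpow (by norm_num) (by norm_num)] at this
    have hLge : -(m/n) ≤ L := by
      have := (Real.logb_le_logb (by norm_num : (1:ℝ) < 2) (hu0 (-(m/n))) hρ).2 h1
      rwa [Real.logb_rpow (by norm_num) (by norm_num)] at this
    have hnL1 : (n:ℝ) * L ≤ m := by
      have := mul_le_mul_of_nonneg_left hLle hn'.le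
      rwa [mul_div_cancel₀ _ (ne_of_gt hn')] at this
    have hnL2 : -m ≤ (n:ℝ) * L := by
      have := mul_le_mul_of_nonneg_left hLge hn'.le
      rw [mul_neg, mul_div_cancel₀ _ (ne_of_gt hn')] at this
      linarith
    have hlstar : ((n:ℝ) * (1 - L) - k) / 2 = (m - (n:ℝ)*L)/2 := by
      simp only [hm_def]; ring
    constructor
    · rw [hlstar]; constructor
      · linarith
      · linarith
    · intro x hx
      obtain ⟨huv, hu1, hv1, hwu, hvw⟩ := hfacts x hx
      set l : ℝ := ((n:ℝ) * (1 - L) - k) / 2 with hl_def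
      set t : ℝ := (2:ℝ)^(-l) with ht_def
      set s : ℝ := (2:ℝ)^(l) with hs_def
      have hts : t * s = 1 := by rw [ht_def, hs_def, ← Real.rpow_add two_pos]; simp
      have ht : 0 < t := hu0 _
      have hs : 0 < s := hu0 _
      have ht2 : t^2 * B = w * A := by
        have e1 : t^2 = (2:ℝ)^(-(2*l)) := by
          rw [ht_def, ← Real.rpow_natCast ((2:ℝ)^(-l)) 2, ← Real.rpow_mul (by norm_num)]
          norm_num; ring_nf
        have e2 : -(2*l) = (n:ℝ)*L - m := by rw [hlstar]; ring
        have e3 : (2:ℝ)^((n:ℝ)*L) = ρ ^ n := by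
          rw [mul_comm, Real.rpow_mul (by norm_num), Real.rpow_natCast,
            Real.rpow_logb two_pos (by norm_num) hρ]
        have e4 : (2:ℝ)^((n:ℝ)*L - m) = (A/B) * w := by
          rw [Real.rpow_sub two_pos, e3, hρpow, hw_def, Real.rpow_neg (by norm_num)]
          rw [div_eq_mul_inv]
        rw [e1, e2, e4]
        field_simp
      -- f l = t*B + s*w*A = 2*(t*B)
      have hfl : t * B = s * w * A := by
        linear_combination (-(t*B)) * hts + s * ht2
      show t * B + (2:ℝ)^(-(m - l)) * A ≤ (2:ℝ)^(-x) * B + (2:ℝ)^(-(m-x)) * A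
      rw [hsplit, hsplit]
      have key : (2:ℝ)^(-x) * B * ((2:ℝ)^x * w * A) = (t*B)^2 := by
        linear_combination (w*A*B) * huv + (-B) * ht2
      have := amgm15 ((2:ℝ)^(-x) * B) ((2:ℝ)^x * w * A) (t*B)
        (by positivity) (by positivity) (by positivity) (le_of_eq key.symm)
      calc t * B + s * w * A = 2 * (t * B) := by rw [← hfl]; ring
        _ ≤ _ := this
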